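/- arXiv:2410.05176 — 2 statements merged into one kernel-verified Lean document; each statement's English description precedes it below -/
import Mathlib

section
/- Let a : ℝ → ℝ be continuously differentiable, 1-periodic, and strictly positive. Then ⟨a·[[a⁻³a′·[[a]]]]⟩ = −⟨a⁻³a′·[[a]]²⟩. (This is the identity defining the homogenization coefficient C₈, up to the factor 1/ρ⁽⁰⁾.) -/
open MeasureTheory Matrix

/-- The mean of a function over one period: `⟨b⟩ = ∫₀¹ b(y) dy`. -/
noncomputable def pmean (b : ℝ → ℝ) : ℝ := ∫ y in (0:ℝ)..1, b y

/-- The fluctuating (mean-zero) part: `{b} = b − ⟨b⟩`. -/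
noncomputable def pfluct (b : ℝ → ℝ) : ℝ → ℝ := fun y => b y - pmean b

/-- The mean-zero primitive of the fluctuating part:
`[[b]](y) = ∫₀^y {b}(ξ) dξ − ∫₀¹ (∫₀^s {b}(ξ) dξ) ds`. -/
noncomputable def pbracket (b : ℝ → ℝ) : ℝ → ℝ :=
  fun y => (∫ ξ in (0:ℝ)..y, pfluct b ξ) - ∫ s in (0:ℝ)..1, (∫ ξ in (0:ℝ)..s, pfluct b ξ)

lemma pfluct_cont {f : ℝ → ℝ} (hf : Continuous f) : Continuous (pfluct f) :=
  hf.sub continuous_const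

lemma pfluct_integral {f : ℝ → ℝ} (hf : Continuous f) :
    (∫ y in (0:ℝ)..1, pfluct f y) = 0 := by
  have h1 : IntervalIntegrable f volume 0 1 := hf.intervalIntegrable _ _
  simp [pfluct, intervalIntegral.integral_sub h1 intervalIntegrable_const, pmean]

lemma pbracket_hasDerivAt {f : ℝ → ℝ} (hf : Continuous f) (y : ℝ) :
    HasDerivAt (pbracket f) (pfluct f y) y := by
  have h := (((pfluct_cont hf).integral_hasStrictDerivAt 0 y).hasDerivAt).sub_const
    (∫ s in (0:ℝ)..1, (∫ ξ in (0:ℝ)..s, pfluct f ξ))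
  exact h

lemma pbracket_cont {f : ℝ → ℝ} (hf : Continuous f) : Continuous (pbracket f) :=
  continuous_iff_continuousAt.mpr fun y => (pbracket_hasDerivAt hf y).continuousAt

lemma pbracket_integral {f : ℝ → ℝ} (hf : Continuous f) :
    (∫ y in (0:ℝ)..1, pbracket f y) = 0 := by
  have hG : Continuous fun s => ∫ ξ in (0:ℝ)..s, pfluct f ξ :=
    continuous_iff_continuousAt.mpr fun y =>
      (((pfluct_cont hf).integral_hasStrictDerivAt 0 y).hasDerivAt).continuousAt
  have h1 : IntervalIntegrable (fun s => ∫ ξ in (0:ℝ)..s, pfluct f ξ) volume 0 1 :=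
    hG.intervalIntegrable _ _
  simp [pbracket, intervalIntegral.integral_sub h1 intervalIntegrable_const]

lemma pbracket_one_eq_zero' {f : ℝ → ℝ} (hf : Continuous f) :
    pbracket f 1 = pbracket f 0 := by
  simp [pbracket, pfluct_integral hf]

/-- For `a` continuously differentiable, 1-periodic and strictly positive,
`⟨a·[[a⁻³a′·[[a]]]]⟩ = −⟨a⁻³a′·[[a]]²⟩`. -/
theorem statement10 (a : ℝ → ℝ) (ha : ContDiff ℝ 1 a) (hper : Function.Periodic a 1)
    (hpos : ∀ y, 0 < a y) :
    pmean (fun y => a y * pbracket (fun z => (a z ^ 3)⁻¹ * deriv a z * pbracket a z) y)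
      = - pmean (fun y => (a y ^ 3)⁻¹ * deriv a y * (pbracket a y)^2) := by
  have hca : Continuous a := ha.continuous
  have hA : Continuous (pbracket a) := pbracket_cont hca
  set g : ℝ → ℝ := fun z => (a z ^ 3)⁻¹ * deriv a z * pbracket a z with hg
  have hcg : Continuous g := by
    have h1 : Continuous fun z => (a z ^ 3)⁻¹ :=
      (hca.pow 3).inv₀ fun z => pow_ne_zero 3 (hpos z).ne'
    exact (h1.mul (ha.continuous_deriv le_rfl)).mul hA
  have hG : Continuous (pbracket g) := pbracket_cont hcg
  -- integrability facts
  have hiA : IntervalIntegrable (pbracket a) volume 0 1 := hA.intervalIntegrable _ _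
  have hiG : IntervalIntegrable (pbracket g) volume 0 1 := hG.intervalIntegrable _ _
  -- integration by parts
  have ibp : (∫ y in (0:ℝ)..1,
      pfluct a y * pbracket g y + pbracket a y * pfluct g y)
      = pbracket a 1 * pbracket g 1 - pbracket a 0 * pbracket g 0 := by
    refine intervalIntegral.integral_deriv_mul_eq_sub
      (fun x _ => pbracket_hasDerivAt hca x)
      (fun x _ => pbracket_hasDerivAt hcg x)
      ((pfluct_cont hca).intervalIntegrable _ _)
      ((pfluct_cont hcg).intervalIntegrable _ _)
  have hzero : (∫ y in (0:ℝ)..1,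
      pfluct a y * pbracket g y + pbracket a y * pfluct g y) = 0 := by
    rw [ibp, pbracket_one_eq_zero' hca, pbracket_one_eq_zero' hcg]; ring
  -- split the ibp integral
  have hsplit : (∫ y in (0:ℝ)..1, pfluct a y * pbracket g y)
      = - ∫ y in (0:ℝ)..1, pbracket a y * pfluct g y := by
    have h2 : IntervalIntegrable (fun y => pfluct a y * pbracket g y) volume 0 1 :=
      ((pfluct_cont hca).mul hG).intervalIntegrable 0 1
    have h3 : IntervalIntegrable (fun y => pbracket a y * pfluct g y) volume 0 1 :=
      (hA.mul (pfluct_cont hcg)).intervalIntegrable 0 1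
    have := intervalIntegral.integral_add h2 h3
    rw [this] at hzero
    linarith
  -- LHS : ∫ a * G = ∫ {a} * G  since ∫ G = 0
  have hL : pmean (fun y => a y * pbracket g y)
      = ∫ y in (0:ℝ)..1, pfluct a y * pbracket g y := by
    have h1 : ∀ y, a y * pbracket g y
        = pfluct a y * pbracket g y + pmean a * pbracket g y := by
      intro y; simp [pfluct]; ring
    rw [pmean]
    simp_rw [h1]
    rw [intervalIntegral.integral_add (f := fun y => pfluct a y * pbracket g y)
      (g := fun y => pmean a * pbracket g y)
      (((pfluct_cont hca).mul hG).intervalIntegrable 0 1)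
      ((continuous_const.mul hG).intervalIntegrable 0 1),
      intervalIntegral.integral_const_mul, pbracket_integral hcg]
    ring
  -- RHS : ∫ g * A = ∫ A * {g}
  have hR : pmean (fun y => (a y ^ 3)⁻¹ * deriv a y * (pbracket a y)^2)
      = ∫ y in (0:ℝ)..1, pbracket a y * pfluct g y := by
    have h1 : ∀ y, (a y ^ 3)⁻¹ * deriv a y * (pbracket a y)^2
        = pbracket a y * pfluct g y + pmean g * pbracket a y := by
      intro y; simp only [hg, pfluct]; ring
    rw [pmean]
    simp_rw [h1]
    rw [intervalIntegral.integral_add (f := fun y => pbracket a y * pfluct g y)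
      (g := fun y => pmean g * pbracket a y)
      ((hA.mul (pfluct_cont hcg)).intervalIntegrable 0 1)
      ((continuous_const.mul hA).intervalIntegrable 0 1),
      intervalIntegral.integral_const_mul, pbracket_integral hca]
    ring
  rw [hL, hR, hsplit]
end

section
/- Let a : ℝ → ℝ be continuous, 1-periodic, and strictly positive. Then ⟨a⁻¹·[[[[a]]]]⟩ = ⟨a·[[[[a⁻¹]]]]⟩, and both are equal to −⟨[[a]]·[[a⁻¹]]⟩. (This is the symmetry of the homogenization coefficient C₂.) -/
open MeasureTheory Matrix

lemma pfluct_cont_s13 {b : ℝ → ℝ} (hb : Continuous b) : Continuous (pfluct b) :=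
  hb.sub continuous_const

lemma hasDerivAt_pbracket {b : ℝ → ℝ} (hb : Continuous b) (y : ℝ) :
    HasDerivAt (pbracket b) (pfluct b y) y := by
  have h := ((pfluct_cont_s13 hb).integral_hasStrictDerivAt 0 y).hasDerivAt
  exact h.sub_const (∫ s in (0:ℝ)..1, (∫ ξ in (0:ℝ)..s, pfluct b ξ))

lemma pbracket_cont_s13 {b : ℝ → ℝ} (hb : Continuous b) : Continuous (pbracket b) :=
  continuous_iff_continuousAt.2 fun y => (hasDerivAt_pbracket hb y).continuousAt

lemma integral_pfluct {b : ℝ → ℝ} (hb : Continuous b) :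
    ∫ y in (0:ℝ)..1, pfluct b y = 0 := by
  have : IntervalIntegrable b volume 0 1 := hb.intervalIntegrable 0 1
  simp [pfluct, intervalIntegral.integral_sub this intervalIntegrable_const, pmean]

lemma pbracket_one_eq_zero {b : ℝ → ℝ} (hb : Continuous b) :
    pbracket b 1 = pbracket b 0 := by
  simp [pbracket, integral_pfluct hb]

lemma pmean_pbracket {b : ℝ → ℝ} (hb : Continuous b) : pmean (pbracket b) = 0 := by
  have hF : Continuous fun y => ∫ ξ in (0:ℝ)..y, pfluct b ξ :=
    continuous_iff_continuousAt.2 fun y =>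
      (((pfluct_cont_s13 hb).integral_hasStrictDerivAt 0 y).hasDerivAt).continuousAt
  have h : IntervalIntegrable (fun y => ∫ ξ in (0:ℝ)..y, pfluct b ξ) volume 0 1 :=
    hF.intervalIntegrable 0 1
  simp [pmean, pbracket, intervalIntegral.integral_sub h intervalIntegrable_const]

lemma pfluct_pbracket {b : ℝ → ℝ} (hb : Continuous b) :
    pfluct (pbracket b) = pbracket b := by
  funext y; simp [pfluct, pmean_pbracket hb]

lemma key {f g : ℝ → ℝ} (hf : Continuous f) (hg : Continuous g) :
    pmean (fun y => g y * pbracket (pbracket f) y)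
      = - pmean (fun y => pbracket f y * pbracket g y) := by
  have hBf : Continuous (pbracket f) := pbracket_cont_s13 hf
  have hBg : Continuous (pbracket g) := pbracket_cont_s13 hg
  have hB2f : Continuous (pbracket (pbracket f)) := pbracket_cont_s13 hBf
  -- derivative of pbracket (pbracket f) is pbracket f
  have hu : ∀ x ∈ Set.uIcc (0:ℝ) 1, HasDerivAt (pbracket (pbracket f)) (pbracket f x) x := by
    intro x _
    have := hasDerivAt_pbracket hBf x
    rwa [pfluct_pbracket hf] at this
  have hv : ∀ x ∈ Set.uIcc (0:ℝ) 1, HasDerivAt (pbracket g) (pfluct g x) x := fun x _ =>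
    hasDerivAt_pbracket hg x
  have hu' : IntervalIntegrable (pbracket f) volume 0 1 := hBf.intervalIntegrable 0 1
  have hv' : IntervalIntegrable (pfluct g) volume 0 1 := (pfluct_cont_s13 hg).intervalIntegrable 0 1
  have ibp := intervalIntegral.integral_mul_deriv_eq_deriv_mul hu hv hu' hv'
  rw [pbracket_one_eq_zero hBf, pbracket_one_eq_zero hg] at ibp
  -- ibp : ∫ x in 0..1, B2f x * pfluct g x = ... - ∫ x in 0..1, Bf x * Bg x
  have hsplit : pmean (fun y => g y * pbracket (pbracket f) y)
      = (∫ x in (0:ℝ)..1, pbracket (pbracket f) x * pfluct g x)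
        + pmean g * pmean (pbracket (pbracket f)) := by
    have h1 : IntervalIntegrable (fun y => pbracket (pbracket f) y * pfluct g y) volume 0 1 :=
      (hB2f.mul (pfluct_cont_s13 hg)).intervalIntegrable 0 1
    have h2 : IntervalIntegrable (fun y => pmean g * pbracket (pbracket f) y) volume 0 1 :=
      (continuous_const.mul hB2f).intervalIntegrable 0 1
    have : (fun y => g y * pbracket (pbracket f) y)
        = fun y => pbracket (pbracket f) y * pfluct g y + pmean g * pbracket (pbracket f) y := by
      funext y; simp [pfluct]; ring
    rw [pmean, this, intervalIntegral.integral_add h1 h2,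
      intervalIntegral.integral_const_mul]
    rfl
  rw [hsplit, pmean_pbracket hBf, mul_zero, add_zero, ibp]
  simp [pmean]
/-- For `a` continuous, 1-periodic and strictly positive,
`⟨a⁻¹·[[[[a]]]]⟩ = ⟨a·[[[[a⁻¹]]]]⟩` and both equal `−⟨[[a]]·[[a⁻¹]]⟩`
(the symmetry of the homogenization coefficient `C₂`). -/
theorem statement13 (a : ℝ → ℝ) (ha : Continuous a) (hper : Function.Periodic a 1)
    (hpos : ∀ y, 0 < a y) :
    pmean (fun y => (a y)⁻¹ * pbracket (pbracket a) y)
      = pmean (fun y => a y * pbracket (pbracket (fun z => (a z)⁻¹)) y) ∧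
    pmean (fun y => (a y)⁻¹ * pbracket (pbracket a) y)
      = - pmean (fun y => pbracket a y * pbracket (fun z => (a z)⁻¹) y) := by
  have hinv : Continuous fun z => (a z)⁻¹ := ha.inv₀ fun y => (hpos y).ne'
  have h1 := key ha hinv
  have h2 := key hinv ha
  have hcomm : pmean (fun y => pbracket (fun z => (a z)⁻¹) y * pbracket a y)
      = pmean (fun y => pbracket a y * pbracket (fun z => (a z)⁻¹) y) := by
    unfold pmean; congr 1; funext y; ring
  exact ⟨by rw [h1, h2, hcomm], by rw [h1]⟩
end
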